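/- arXiv:2505.17751 — 3 statements merged into one kernel-verified Lean document; each statement's English description precedes it below -/
import Mathlib

section
/- Fix $0 < \delta < 1/2$ and let $s:[0,1]\to[0,1]$ be the hat function $s(t) = t/\delta$ for $t \le \delta$, $s(t)=1$ for $\delta < t \le 1-\delta$, and $s(t) = 1-(t-1+\delta)/\delta$ for $t > 1-\delta$. Define curves $f_d:[0,1]\to[0,1]^d$ recursively by $f_1(t)=t$ and $f_{d+1}(t) = (f_d(s(t)), t)$. Then for every $d \geq 1$, $f_d$ is continuous, and for every $z \in \{0,1\}^d$ there exists a closed interval $I \subseteq [0,1]$ of length $\delta^d$ such that $|f_d(t)_i - z_i| \leq \delta$ for all $t \in I$ and all $i = 1,\ldots,d$. -/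
noncomputable def hatS (δ : ℝ) (t : ℝ) : ℝ :=
  if t ≤ δ then t / δ else if t ≤ 1 - δ then 1 else 1 - (t - 1 + δ) / δ

noncomputable def curveF (δ : ℝ) : (d : ℕ) → ℝ → (Fin (d + 1) → ℝ)
  | 0, t => fun _ => t
  | d + 1, t => Fin.snoc (curveF δ d (hatS δ t)) t

lemma hatS_continuous {δ : ℝ} (hδ0 : 0 < δ) (hδ1 : δ < 1 / 2) :
    Continuous (hatS δ) := by
  have hne : δ ≠ 0 := ne_of_gt hδ0
  unfold hatS
  apply Continuous.if_le
  · exact continuous_id.div_const δ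
  · apply Continuous.if_le
    · exact continuous_const
    · exact continuous_const.sub (((continuous_id.sub continuous_const).add continuous_const).div_const δ)
    · exact continuous_id
    · exact continuous_const
    · intro x hx
      rw [hx]; field_simp; ring
  · exact continuous_id
  · exact continuous_const
  · intro x hx
    rw [hx]
    rw [if_pos (by linarith)]
    field_simp

lemma curveF_continuous {δ : ℝ} (hδ0 : 0 < δ) (hδ1 : δ < 1 / 2) (d : ℕ) :
    Continuous (curveF δ d) := by
  induction d with
  | zero => exact continuous_pi fun _ => continuous_id
  | succ d ih =>
    apply continuous_pi
    intro i
    induction i using Fin.lastCases with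
    | last => simpa [curveF] using continuous_id'
    | cast j =>
      have : (fun t => curveF δ (d+1) t j.castSucc)
          = fun t => curveF δ d (hatS δ t) j := by
        funext t; simp [curveF]
      rw [this]
      exact (continuous_apply j).comp (ih.comp (hatS_continuous hδ0 hδ1))

lemma hatS_right {δ t : ℝ} (hδ0 : 0 < δ) (hδ1 : δ < 1 / 2) (ht : 1 - δ ≤ t) :
    hatS δ t = (1 - t) / δ := by
  unfold hatS
  rcases le_or_gt t δ with h | h
  · linarith
  · rw [if_neg (not_le.mpr h)]
    rcases le_or_gt t (1 - δ) with h2 | h2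
    · have : t = 1 - δ := le_antisymm h2 ht
      rw [if_pos h2, this]; field_simp; ring
    · rw [if_neg (not_le.mpr h2)]; field_simp; ring

/-- each curve `f_d` (here `curveF δ (d-1)`, `d ≥ 1`) is continuous on
`[0,1]` and for every vertex `z` of the cube there is a closed interval of length
`δ^d` on which the curve stays within `δ` of `z` in every coordinate. -/
theorem stmt5 (δ : ℝ) (hδ0 : 0 < δ) (hδ1 : δ < 1 / 2) (d : ℕ) :
    ContinuousOn (curveF δ d) (Set.Icc (0 : ℝ) 1) ∧
    ∀ z : Fin (d + 1) → ℝ, (∀ i, z i = 0 ∨ z i = 1) →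
      ∃ a b : ℝ, a ≤ b ∧ b - a = δ ^ (d + 1) ∧ Set.Icc a b ⊆ Set.Icc (0 : ℝ) 1 ∧
        ∀ t ∈ Set.Icc a b, ∀ i, |curveF δ d t i - z i| ≤ δ := by
  induction d with
  | zero =>
    refine ⟨(curveF_continuous hδ0 hδ1 0).continuousOn, ?_⟩
    intro z hz
    rcases hz 0 with h | h
    · refine ⟨0, δ, le_of_lt hδ0, by rw [pow_one, sub_zero], ?_, ?_⟩
      · exact Set.Icc_subset_Icc le_rfl (by linarith)
      · intro t ht i
        have hi : i = 0 := by omega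
        subst hi
        simp only [curveF, h]
        rw [abs_of_nonneg (by simpa using ht.1)]
        simpa using ht.2
    · refine ⟨1 - δ, 1, by linarith, by rw [pow_one]; ring, ?_, ?_⟩
      · exact Set.Icc_subset_Icc (by linarith) le_rfl
      · intro t ht i
        have hi : i = 0 := by omega
        subst hi
        simp only [curveF, h]
        rw [abs_of_nonpos (by linarith [ht.2])]
        linarith [ht.1]
  | succ d ih =>
    refine ⟨(curveF_continuous hδ0 hδ1 (d+1)).continuousOn, ?_⟩
    intro z hz
    set z' : Fin (d + 1) → ℝ := fun j => z j.castSucc with hz'def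
    obtain ⟨a, b, hab, hlen, hsub, hclose⟩ := ih.2 z' (fun i => hz _)
    have ha0 : 0 ≤ a := (hsub ⟨le_rfl, hab⟩).1
    have hb1 : b ≤ 1 := (hsub ⟨hab, le_rfl⟩).2
    rcases hz (Fin.last (d + 1)) with h | h
    · -- z_last = 0; use [δa, δb]
      refine ⟨δ * a, δ * b, by nlinarith, by rw [pow_succ δ (d+1)]; nlinarith, ?_, ?_⟩
      · intro t ht
        exact ⟨le_trans (by positivity) ht.1, le_trans ht.2 (by nlinarith)⟩
      · intro t ht i
        have ht0 : 0 ≤ t := le_trans (by positivity) ht.1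
        have htδ : t ≤ δ := le_trans ht.2 (by nlinarith)
        have hhat : hatS δ t = t / δ := if_pos htδ
        induction i using Fin.lastCases with
        | last =>
          simp only [curveF, Fin.snoc_last, h, sub_zero]
          rw [abs_of_nonneg ht0]; exact htδ
        | cast j =>
          have hco : curveF δ (d+1) t j.castSucc = curveF δ d (hatS δ t) j := by
            simp [curveF]
          rw [hco, hhat]
          have hmem : t / δ ∈ Set.Icc a b := by
            constructor
            · rw [le_div_iff₀ hδ0]; linarith [ht.1]
            · rw [div_le_iff₀ hδ0]; linarith [ht.2]
          exact hclose _ hmem j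
    · -- z_last = 1; use [1 - δb, 1 - δa]
      refine ⟨1 - δ * b, 1 - δ * a, by nlinarith, by rw [pow_succ δ (d+1)]; nlinarith, ?_, ?_⟩
      · intro t ht
        constructor
        · have : δ * b ≤ 1 := by nlinarith
          linarith [ht.1]
        · have : 0 ≤ δ * a := by positivity
          linarith [ht.2]
      · intro t ht i
        have ht1 : 1 - δ ≤ t := by nlinarith [ht.1]
        have ht2 : t ≤ 1 := by nlinarith [ht.2]
        have hhat : hatS δ t = (1 - t) / δ := hatS_right hδ0 hδ1 ht1
        induction i using Fin.lastCases with
        | last =>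
          simp only [curveF, Fin.snoc_last, h]
          rw [abs_of_nonpos (by linarith)]
          linarith
        | cast j =>
          have hco : curveF δ (d+1) t j.castSucc = curveF δ d (hatS δ t) j := by
            simp [curveF]
          rw [hco, hhat]
          have hmem : (1 - t) / δ ∈ Set.Icc a b := by
            constructor
            · rw [le_div_iff₀ hδ0]; linarith [ht.2]
            · rw [div_le_iff₀ hδ0]; linarith [ht.1]
          exact hclose _ hmem j
end

section
/- Let $d, n \in \mathbb{N}$ with $n \le d$, $1 \le p < \infty$, $0 < \delta < 1/2$, and $z \in \{-1,1\}^d$. Define $Q = \{x \in [-1,1]^d : \max_{j=1,\ldots,n}|x_j - z_j| \leq 1 - (1-2\delta)/n^{1/p}\}$, and let $B_{d,p} = \{x \in \mathbb{R}^d : \|x\|_p \leq 1\}$ with normalized Lebesgue measure $\mu$ (so $\mu(B_{d,p}) = 1$). Then $\mu(Q \cap B_{d,p}) \geq \delta^n (2\delta)^{d-n}$. -/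
open MeasureTheory

/-- Volume of the image of a set under a diagonal linear map. -/
lemma stmt7_diag_image_volume {d : ℕ} (w : Fin d → ℝ) (s : Set (Fin d → ℝ)) :
    volume ((fun y (i : Fin d) => w i * y i) '' s)
      = ENNReal.ofReal |∏ i, w i| * volume s := by
  have h : (fun y (i : Fin d) => w i * y i)
      = ⇑(Matrix.toLin' (Matrix.diagonal w)) := by
    ext y i
    simp [Matrix.toLin'_apply, Matrix.mulVec_diagonal]
  rw [h, Measure.addHaar_image_linearMap, LinearMap.det_toLin', Matrix.det_diagonal]

/-- Volume of the image of a set under a translation. -/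
lemma stmt7_translate_image_volume {d : ℕ} (v : Fin d → ℝ) (s : Set (Fin d → ℝ)) :
    volume ((fun y => v + y) '' s) = volume s := by
  have h : (fun y : Fin d → ℝ => v + y) '' s = (fun y : Fin d → ℝ => -v + y) ⁻¹' s := by
    ext x
    simp only [Set.mem_image, Set.mem_preimage]
    constructor
    · rintro ⟨y, hy, rfl⟩
      simpa using hy
    · intro hx
      exact ⟨-v + x, hx, by abel⟩
  rw [h, measure_preimage_add]

/-- the corner region `Q` meets the `p`-ball in relative volume at
least `δ^n (2δ)^{d-n}`. -/
theorem stmt7 (d n : ℕ) (hn : 1 ≤ n) (hnd : n ≤ d) (p : ℝ) (hp : 1 ≤ p)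
    (δ : ℝ) (hδ0 : 0 < δ) (hδ1 : δ < 1 / 2) (z : Fin d → ℝ)
    (hz : ∀ i, z i = -1 ∨ z i = 1)
    (Q : Set (Fin d → ℝ))
    (hQ : Q = {x | (∀ i, x i ∈ Set.Icc (-1 : ℝ) 1) ∧
      ∀ j : Fin d, (j : ℕ) < n → |x j - z j| ≤ 1 - (1 - 2 * δ) / (n : ℝ) ^ (1 / p)})
    (B : Set (Fin d → ℝ))
    (hB : B = {x | (∑ i, |x i| ^ p) ^ (1 / p) ≤ 1}) :
    ENNReal.ofReal (δ ^ n * (2 * δ) ^ (d - n)) * volume B ≤ volume (Q ∩ B) := by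
  have hp0 : (0 : ℝ) < p := lt_of_lt_of_le one_pos hp
  have hp0' : p ≠ 0 := ne_of_gt hp0
  have hip : (0 : ℝ) < 1 / p := by positivity
  have hzabs : ∀ i, |z i| = 1 := by
    intro i; rcases hz i with h | h <;> simp [h]
  have hn0 : (0 : ℝ) < (n : ℝ) := by exact_mod_cast hn
  have hnp1 : (1 : ℝ) ≤ (n : ℝ) ^ (1 / p) := by
    apply Real.one_le_rpow (by exact_mod_cast hn) (le_of_lt hip)
  have hnp0 : (0 : ℝ) < (n : ℝ) ^ (1 / p) := lt_of_lt_of_le one_pos hnp1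
  set c : ℝ := (1 - 2 * δ) / (n : ℝ) ^ (1 / p) with hc_def
  have hδ2 : (0 : ℝ) < 1 - 2 * δ := by linarith
  have hc0 : 0 ≤ c := le_of_lt (div_pos hδ2 hnp0)
  have hc1 : c ≤ 1 - 2 * δ := by
    rw [hc_def, div_le_iff₀ hnp0]
    nlinarith
  -- the partially positive parts of the ball
  set A : ℕ → Set (Fin d → ℝ) :=
    fun k => B ∩ {y | ∀ j : Fin d, (j : ℕ) < k → 0 ≤ y j} with hA_def
  -- flip symmetry: volume B ≤ 2^k * volume (A k)
  have key : ∀ k, k ≤ d → volume B ≤ 2 ^ k * volume (A k) := by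
    intro k
    induction k with
    | zero =>
      intro _
      have : B ⊆ A 0 := fun y hy => ⟨hy, fun j hj => absurd hj (Nat.not_lt_zero _)⟩
      simpa using measure_mono this
    | succ k ih =>
      intro hk
      have hkd : k < d := lt_of_lt_of_le (Nat.lt_succ_self k) hk
      set κ : Fin d := ⟨k, hkd⟩ with hκ
      set F : (Fin d → ℝ) → (Fin d → ℝ) :=
        fun y i => (if i = κ then (-1 : ℝ) else 1) * y i with hF
      have hFB : ∀ y, y ∈ B → F y ∈ B := by
        intro y hy
        rw [hB] at hy ⊢
        have habs : ∀ i, |F y i| = |y i| := by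
          intro i
          by_cases h : i = κ <;> simp [hF, h]
        show (∑ i, |F y i| ^ p) ^ (1 / p) ≤ 1
        rw [Finset.sum_congr rfl fun i _ => by rw [habs i]]
        exact hy
      have hFinv : ∀ y, F (F y) = y := by
        intro y; funext i
        by_cases h : i = κ <;> simp [hF, h]
      have hsub : A k ⊆ A (k + 1) ∪ F '' (A (k + 1)) := by
        rintro y ⟨hyB, hy0⟩
        rcases le_or_gt 0 (y κ) with h | h
        · left
          refine ⟨hyB, fun j hj => ?_⟩
          rcases Nat.lt_succ_iff_lt_or_eq.1 hj with hj' | hj'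
          · exact hy0 j hj'
          · have : j = κ := Fin.ext hj'
            rwa [this]
        · right
          refine ⟨F y, ⟨hFB y hyB, fun j hj => ?_⟩, hFinv y⟩
          rcases Nat.lt_succ_iff_lt_or_eq.1 hj with hj' | hj'
          · have hjκ : j ≠ κ := by
              intro hh; rw [hh] at hj'; simp [hκ] at hj'
            simpa [hF, hjκ] using hy0 j hj'
          · have : j = κ := Fin.ext hj'
            rw [this]
            simp [hF]
            linarith
      have hFvol : volume (F '' (A (k + 1))) = volume (A (k + 1)) := by
        have h := stmt7_diag_image_volume
          (fun i : Fin d => if i = κ then (-1 : ℝ) else 1) (A (k + 1))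
        simp only [Finset.prod_ite_eq', Finset.mem_univ, if_true] at h
        simpa [hF] using h
      have step : volume (A k) ≤ 2 * volume (A (k + 1)) := by
        calc volume (A k) ≤ volume (A (k + 1) ∪ F '' (A (k + 1))) := measure_mono hsub
          _ ≤ volume (A (k + 1)) + volume (F '' (A (k + 1))) := measure_union_le _ _
          _ = 2 * volume (A (k + 1)) := by rw [hFvol, two_mul]
      calc volume B ≤ 2 ^ k * volume (A k) := ih (le_of_lt hkd)
        _ ≤ 2 ^ k * (2 * volume (A (k + 1))) := by gcongr
        _ = 2 ^ (k + 1) * volume (A (k + 1)) := by ring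
  -- the affine image
  set w : Fin d → ℝ := fun i => if (i : ℕ) < n then 2 * δ * z i else 2 * δ with hw_def
  set v : Fin d → ℝ := fun i => if (i : ℕ) < n then z i * c else 0 with hv_def
  have hwabs : ∀ i, |w i| = 2 * δ := by
    intro i
    by_cases h : (i : ℕ) < n <;> simp [hw_def, h, abs_mul, hzabs, abs_of_pos hδ0]
  set T : (Fin d → ℝ) → (Fin d → ℝ) := fun y i => v i + w i * y i with hT
  -- volume of the image
  have hTvol : volume (T '' (A n)) = ENNReal.ofReal ((2 * δ) ^ d) * volume (A n) := by
    have hco : T = (fun y => v + y) ∘ (fun y (i : Fin d) => w i * y i) := by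
      funext y; funext i; simp [hT]
    rw [hco, Set.image_comp, stmt7_translate_image_volume, stmt7_diag_image_volume]
    congr 2
    rw [Finset.abs_prod]
    rw [Finset.prod_congr rfl (fun i _ => hwabs i), Finset.prod_const]
    simp
  -- membership facts for y in A n
  have hmem : ∀ y ∈ A n, T y ∈ Q ∩ B := by
    rintro y ⟨hyB, hy0⟩
    rw [hB] at hyB
    have hyB' : (∑ i, |y i| ^ p) ^ (1 / p) ≤ 1 := hyB
    have hsum_nonneg : (0:ℝ) ≤ ∑ i, |y i| ^ p :=
      Finset.sum_nonneg fun i _ => Real.rpow_nonneg (abs_nonneg _) _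
    have hsum : ∑ i, |y i| ^ p ≤ 1 := by
      by_contra hcon
      push_neg at hcon
      have h1 : (1:ℝ) < (∑ i, |y i| ^ p) ^ (1 / p) := by
        calc (1:ℝ) = 1 ^ (1/p) := by rw [Real.one_rpow]
          _ < (∑ i, |y i| ^ p) ^ (1 / p) := Real.rpow_lt_rpow zero_le_one hcon hip
      linarith
    have hyi : ∀ i, |y i| ≤ 1 := by
      intro i
      by_contra hcon
      push_neg at hcon
      have h1 : |y i| ^ p ≤ ∑ j, |y j| ^ p :=
        Finset.single_le_sum (fun j _ => Real.rpow_nonneg (abs_nonneg _) _) (Finset.mem_univ i)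
      have h2 : (1:ℝ) < |y i| ^ p := by
        calc (1:ℝ) = 1 ^ p := by rw [Real.one_rpow]
          _ < |y i| ^ p := Real.rpow_lt_rpow zero_le_one hcon hp0
      linarith
    -- B membership via Minkowski
    have hTB : T y ∈ B := by
      rw [hB]
      have hmink := Real.Lp_add_le Finset.univ v (fun i => w i * y i) hp
      have hvnorm : (∑ i, |v i| ^ p) ^ (1 / p) = 1 - 2 * δ := by
        have hterm : ∀ i : Fin d, |v i| ^ p = if (i : ℕ) < n then c ^ p else 0 := by
          intro i
          by_cases h : (i : ℕ) < n
          · simp [hv_def, h, abs_mul, hzabs, abs_of_nonneg hc0]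
          · simp [hv_def, h, Real.zero_rpow hp0']
        have hfilter : (Finset.univ.filter fun i : Fin d => (i : ℕ) < n)
            = Finset.map (Fin.castLEEmb hnd) Finset.univ := by
          ext i
          simp only [Finset.mem_filter, Finset.mem_univ, true_and, Finset.mem_map,
            Fin.castLEEmb, Function.Embedding.coeFn_mk]
          constructor
          · intro h
            exact ⟨⟨(i : ℕ), h⟩, by ext; simp⟩
          · rintro ⟨j, rfl⟩
            simpa using j.isLt
        have hsumv : ∑ i, |v i| ^ p = (n : ℝ) * c ^ p := by
          rw [Finset.sum_congr rfl (fun i _ => hterm i), ← Finset.sum_filter, hfilter,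
            Finset.sum_const, Finset.card_map, Finset.card_univ, Fintype.card_fin,
            nsmul_eq_mul]
        rw [hsumv, Real.mul_rpow (le_of_lt hn0) (Real.rpow_nonneg hc0 p),
          ← Real.rpow_mul hc0, mul_one_div_cancel hp0', Real.rpow_one, hc_def,
          mul_comm, div_mul_cancel₀ _ (ne_of_gt hnp0)]
      have hwnorm : (∑ i, |w i * y i| ^ p) ^ (1 / p) ≤ 2 * δ := by
        have hterm : ∀ i : Fin d, |w i * y i| ^ p = (2 * δ) ^ p * |y i| ^ p := by
          intro i
          rw [abs_mul, hwabs, Real.mul_rpow (by positivity) (abs_nonneg _)]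
        have h1 : ∑ i, |w i * y i| ^ p ≤ (2 * δ) ^ p := by
          rw [Finset.sum_congr rfl (fun i _ => hterm i), ← Finset.mul_sum]
          calc (2 * δ) ^ p * ∑ i, |y i| ^ p ≤ (2 * δ) ^ p * 1 := by
                apply mul_le_mul_of_nonneg_left hsum (Real.rpow_nonneg (by positivity) p)
            _ = (2 * δ) ^ p := mul_one _
        calc (∑ i, |w i * y i| ^ p) ^ (1 / p) ≤ ((2 * δ) ^ p) ^ (1 / p) :=
              Real.rpow_le_rpow (Finset.sum_nonneg fun i _ =>
                Real.rpow_nonneg (abs_nonneg _) _) h1 (le_of_lt hip)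
          _ = 2 * δ := by
              rw [← Real.rpow_mul (by positivity), mul_one_div_cancel hp0', Real.rpow_one]
      calc (∑ i, |T y i| ^ p) ^ (1 / p)
          ≤ (∑ i, |v i| ^ p) ^ (1 / p) + (∑ i, |w i * y i| ^ p) ^ (1 / p) := hmink
        _ ≤ (1 - 2 * δ) + 2 * δ := by rw [hvnorm]; exact add_le_add (le_refl _) hwnorm
        _ = 1 := by ring
    -- Q membership
    have hTQ : T y ∈ Q := by
      rw [hQ]
      constructor
      · intro i
        rw [Set.mem_Icc, ← abs_le]
        by_cases h : (i : ℕ) < n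
        · have hy0i : 0 ≤ y i := hy0 i h
          have hyi1 : y i ≤ 1 := le_trans (le_abs_self _) (hyi i)
          have : T y i = z i * (c + 2 * δ * y i) := by simp [hT, hv_def, hw_def, h]; ring
          rw [this, abs_mul, hzabs, one_mul, abs_of_nonneg (by positivity)]
          nlinarith
        · have : T y i = 2 * δ * y i := by simp [hT, hv_def, hw_def, h]
          rw [this, abs_mul]
          calc |2 * δ| * |y i| ≤ |2 * δ| * 1 := by
                apply mul_le_mul_of_nonneg_left (hyi i) (abs_nonneg _)
            _ = 2 * δ := by rw [mul_one, abs_of_pos (by positivity)]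
            _ ≤ 1 := by linarith
      · intro j hj
        have hy0j : 0 ≤ y j := hy0 j hj
        have hyj1 : y j ≤ 1 := le_trans (le_abs_self _) (hyi j)
        have hTj : T y j = z j * (c + 2 * δ * y j) := by simp [hT, hv_def, hw_def, hj]; ring
        have : T y j - z j = z j * (c + 2 * δ * y j - 1) := by rw [hTj]; ring
        rw [this, abs_mul, hzabs, one_mul, abs_of_nonpos (by nlinarith)]
        nlinarith
    exact ⟨hTQ, hTB⟩
  -- put everything together
  have hsub : T '' (A n) ⊆ Q ∩ B := by
    rintro x ⟨y, hy, rfl⟩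
    exact hmem y hy
  have main : ENNReal.ofReal ((2 * δ) ^ d) * volume (A n) ≤ volume (Q ∩ B) := by
    rw [← hTvol]; exact measure_mono hsub
  have harith : ENNReal.ofReal (δ ^ n * (2 * δ) ^ (d - n)) * (2 : ENNReal) ^ n
      = ENNReal.ofReal ((2 * δ) ^ d) := by
    have h2 : ((2 : ENNReal)) ^ n = ENNReal.ofReal ((2 : ℝ) ^ n) := by
      rw [ENNReal.ofReal_pow (by norm_num)]
      norm_num
    rw [h2, ← ENNReal.ofReal_mul (by positivity)]
    congr 1
    have : (2 * δ) ^ d = (2 * δ) ^ n * (2 * δ) ^ (d - n) := by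
      rw [← pow_add, Nat.add_sub_cancel' hnd]
    rw [this, mul_pow]
    ring
  calc ENNReal.ofReal (δ ^ n * (2 * δ) ^ (d - n)) * volume B
      ≤ ENNReal.ofReal (δ ^ n * (2 * δ) ^ (d - n)) * (2 ^ n * volume (A n)) := by
        gcongr
        exact key n hnd
    _ = (ENNReal.ofReal (δ ^ n * (2 * δ) ^ (d - n)) * 2 ^ n) * volume (A n) := by
        rw [mul_assoc]
    _ = ENNReal.ofReal ((2 * δ) ^ d) * volume (A n) := by rw [harith]
    _ ≤ volume (Q ∩ B) := main
end

section
/- Let $\alpha$ be a CNF formula over variables $x_1,\ldots,x_n$ and let $r:\mathbb{R}\to[0,1]$ be continuous with $r(x)=0$ for $x \le 1/2$ and $r(x)=1$ for $x \ge 1-\delta$, where $0<\delta<1/2$. Define $F_\alpha:[0,1]^n\to\mathbb{R}$ by $F_\alpha(x) = r\big(1 + \sum_{C\in\alpha}\big(r\big(\sum_{(i,\gamma)\in C} r(\gamma x_i)\big) - 1\big)\big)$, where $\gamma x_i = x_i$ for positive literals and $\gamma x_i = 1 - x_i$ for negative literals. If $\alpha$ is unsatisfiable, then $F_\alpha(x)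 = 0$ for all $x \in [0,1]^n$. If $z \in \{0,1\}^n$ satisfies $\alpha$, then $F_\alpha(x) = 1$ for all $x$ with $\max_i |x_i - z_i| \leq \delta$. -/
/-- Value of a literal applied to a real number: identity or `1 - ·`. -/
def litVal (γ : Bool) (t : ℝ) : ℝ := if γ then t else 1 - t

/-- Value of a literal applied to a Boolean. -/
def litB (γ : Bool) (b : Bool) : Bool := if γ then b else !b

/-- An assignment satisfies a CNF formula if every clause contains a true literal. -/
def SatCNF {n : ℕ} (α : Finset (Finset (Fin n × Bool))) (z : Fin n → Bool) : Prop :=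
  ∀ C ∈ α, ∃ l ∈ C, litB l.2 (z l.1) = true

/-- The function `F_α` associated with a CNF formula and an activation-shape `r`. -/
noncomputable def Falpha {n : ℕ} (r : ℝ → ℝ) (α : Finset (Finset (Fin n × Bool)))
    (x : Fin n → ℝ) : ℝ :=
  r (1 + ∑ C ∈ α, (r (∑ l ∈ C, r (litVal l.2 (x l.1))) - 1))

/-- `F_α` vanishes on the cube if `α` is unsatisfiable, and equals `1`
near any satisfying assignment. -/
theorem stmt18 {n : ℕ} (δ : ℝ) (hδ0 : 0 < δ) (hδ1 : δ < 1 / 2)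
    (r : ℝ → ℝ) (hrc : Continuous r) (hr01 : ∀ x, r x ∈ Set.Icc (0 : ℝ) 1)
    (hr0 : ∀ x : ℝ, x ≤ 1 / 2 → r x = 0) (hr1 : ∀ x : ℝ, 1 - δ ≤ x → r x = 1)
    (α : Finset (Finset (Fin n × Bool))) :
    ((¬ ∃ z : Fin n → Bool, SatCNF α z) →
      ∀ x : Fin n → ℝ, (∀ i, x i ∈ Set.Icc (0 : ℝ) 1) → Falpha r α x = 0) ∧
    (∀ z : Fin n → Bool, SatCNF α z →
      ∀ x : Fin n → ℝ, (∀ i, x i ∈ Set.Icc (0 : ℝ) 1) →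
        (∀ i, |x i - (if z i then 1 else 0)| ≤ δ) → Falpha r α x = 1) := by
  constructor
  · -- unsatisfiable case
    intro hunsat x hx
    -- define the associated boolean assignment
    set z : Fin n → Bool := fun i => decide ((1:ℝ)/2 < x i) with hz
    have hznot : ¬ SatCNF α z := fun h => hunsat ⟨z, h⟩
    simp only [SatCNF, not_forall] at hznot
    obtain ⟨C, hCα, hC⟩ := hznot
    push_neg at hC
    -- every literal in C evaluates (under r) to 0
    have hlit : ∀ l ∈ C, r (litVal l.2 (x l.1)) = 0 := by
      intro l hl
      have hfalse := hC l hl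
      apply hr0
      rcases hb : l.2 with _ | _
      · -- negative literal : litB = !z l.1 ≠ true, so z l.1 = true, x l.1 > 1/2
        simp [litB, hb] at hfalse
        rw [hz] at hfalse
        simp only [decide_eq_true_eq] at hfalse
        have : (1:ℝ)/2 < x l.1 := hfalse
        simpa [litVal, hb] using by linarith
      · -- positive literal : z l.1 = false, x l.1 ≤ 1/2
        simp [litB, hb] at hfalse
        rw [hz] at hfalse
        have : ¬ ((1:ℝ)/2 < x l.1) := of_decide_eq_false hfalse
        simpa [litVal, hb] using le_of_not_gt this
    have hsumC : (∑ l ∈ C, r (litVal l.2 (x l.1))) = 0 :=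
      Finset.sum_eq_zero hlit
    have hrC : r (∑ l ∈ C, r (litVal l.2 (x l.1))) - 1 = -1 := by
      rw [hsumC, hr0 0 (by norm_num)]; ring
    have hrest : ∀ D ∈ α, r (∑ l ∈ D, r (litVal l.2 (x l.1))) - 1 ≤ 0 := by
      intro D _
      have := (hr01 (∑ l ∈ D, r (litVal l.2 (x l.1)))).2
      linarith
    have hsum : (∑ D ∈ α, (r (∑ l ∈ D, r (litVal l.2 (x l.1))) - 1)) ≤ -1 := by
      rw [← Finset.add_sum_erase α _ hCα, hrC]
      have : (∑ D ∈ α.erase C, (r (∑ l ∈ D, r (litVal l.2 (x l.1))) - 1)) ≤ 0 :=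
        Finset.sum_nonpos fun D hD => hrest D (Finset.mem_of_mem_erase hD)
      linarith
    unfold Falpha
    apply hr0
    linarith
  · -- satisfiable case
    intro z hsat x hx hnear
    have hclause : ∀ C ∈ α, r (∑ l ∈ C, r (litVal l.2 (x l.1))) = 1 := by
      intro C hCα
      obtain ⟨l, hl, hlit⟩ := hsat C hCα
      have hval : 1 - δ ≤ litVal l.2 (x l.1) := by
        have h1 := hnear l.1
        rcases hb : l.2 with _ | _
        · -- negative literal true: z l.1 = false, x l.1 ≤ δ
          simp [litB, hb] at hlit
          rw [hlit] at h1
          simp at h1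
          have := abs_le.mp h1
          simp [litVal, hb]
          linarith [this.2]
        · -- positive literal true: z l.1 = true, x l.1 ≥ 1 - δ
          simp [litB, hb] at hlit
          rw [hlit] at h1
          simp at h1
          have := abs_le.mp h1
          simp [litVal, hb]
          linarith [this.1]
      have hrl : r (litVal l.2 (x l.1)) = 1 := hr1 _ hval
      apply hr1
      have hle : r (litVal l.2 (x l.1)) ≤ ∑ l' ∈ C, r (litVal l'.2 (x l'.1)) :=
        Finset.single_le_sum (f := fun l' : Fin n × Bool => r (litVal l'.2 (x l'.1))) (fun l' _ => (hr01 _).1) hl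
      rw [hrl] at hle
      linarith
    have hsum : (∑ C ∈ α, (r (∑ l ∈ C, r (litVal l.2 (x l.1))) - 1)) = 0 :=
      Finset.sum_eq_zero fun C hC => by rw [hclause C hC]; ring
    unfold Falpha
    rw [hsum]
    apply hr1
    linarith
end
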